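/- For fixed a > 0, the function y ↦ (coth(a) - y coth(ay)) / ((ay coth(ay) - 1)(a coth(a) - 1)) + 4(1 - y^{-2})/(sinh(2a) - 2a) is strictly decreasing on (0, 1). -/

import Mathlib

open Real Set

-- generic: f 0 = 0, f has positive derivative on Ioi 0 => f t > 0 for t > 0
lemma pos_of_deriv_pos (f f' : ℝ → ℝ) (hd : ∀ x, HasDerivAt f (f' x) x)
    (h0 : f 0 = 0) (hp : ∀ x, 0 < x → 0 < f' x) {t : ℝ} (ht : 0 < t) : 0 < f t := by
  have hm : StrictMonoOn f (Ici 0) := by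
    apply strictMonoOn_of_deriv_pos (convex_Ici 0)
      (fun x _ => (hd x).continuousAt.continuousWithinAt)
    intro x hx
    rw [interior_Ici] at hx
    rw [(hd x).deriv]
    exact hp x hx
  have := hm (by simp : (0:ℝ) ∈ Ici 0) (le_of_lt ht) ht
  rwa [h0] at this

lemma aux1 {t : ℝ} (ht : 0 < t) : t < Real.sinh t * Real.cosh t := by
  have h1 : t < Real.sinh t := Real.self_lt_sinh_iff.2 ht
  have h2 : (1:ℝ) ≤ Real.cosh t := Real.one_le_cosh t
  nlinarith [Real.sinh_pos_iff.2 ht]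

lemma aux2 {t : ℝ} (ht : 0 < t) : 0 < t * Real.cosh t - Real.sinh t := by
  apply pos_of_deriv_pos (fun x => x * Real.cosh x - Real.sinh x) (fun x => x * Real.sinh x)
    (fun x => by
      have h := ((hasDerivAt_id x).mul (Real.hasDerivAt_cosh x)).sub (Real.hasDerivAt_sinh x)
      exact h.congr_deriv (by simp only [id_eq]; ring)) (by simp) _ ht
  intro x hx
  have := Real.sinh_pos_iff.2 hx
  show 0 < x * Real.sinh x
  positivity

lemma aux3 {t : ℝ} (ht : 0 < t) :
    0 < Real.sinh t * Real.cosh t - t - 2 * t * Real.cosh t + 2 * Real.sinh t := by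
  apply pos_of_deriv_pos
    (fun x => Real.sinh x * Real.cosh x - x - 2 * x * Real.cosh x + 2 * Real.sinh x)
    (fun x => 2 * Real.sinh x * (Real.sinh x - x))
    (fun x => by
      have h := ((((Real.hasDerivAt_sinh x).mul (Real.hasDerivAt_cosh x)).sub
        (hasDerivAt_id x)).sub (((hasDerivAt_const x (2:ℝ)).mul (hasDerivAt_id x)).mul
        (Real.hasDerivAt_cosh x))).add ((Real.hasDerivAt_sinh x).const_mul 2)
      have hc := Real.cosh_sq_sub_sinh_sq x
      refine h.congr_deriv ?_
      simp only [id_eq, Pi.mul_apply]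
      nlinarith [hc]) (by simp) _ ht
  intro x hx
  have h1 := Real.sinh_pos_iff.2 hx
  have h2 := Real.self_lt_sinh_iff.2 hx
  show 0 < 2 * Real.sinh x * (Real.sinh x - x)
  nlinarith

lemma aux4b {t : ℝ} (ht : 0 < t) : 0 < t * Real.sinh t - 2 * Real.cosh t + 2 := by
  apply pos_of_deriv_pos
    (fun x => x * Real.sinh x - 2 * Real.cosh x + 2)
    (fun x => x * Real.cosh x - Real.sinh x)
    (fun x => by
      have h := (((hasDerivAt_id x).mul (Real.hasDerivAt_sinh x)).sub
        ((Real.hasDerivAt_cosh x).const_mul 2)).add (hasDerivAt_const x (2:ℝ))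
      refine h.congr_deriv ?_
      simp only [id_eq]; ring) (by simp) _ ht
  exact fun x hx => aux2 hx

lemma aux4c {t : ℝ} (ht : 0 < t) : 0 < t * Real.cosh t - 3 * Real.sinh t + 2 * t := by
  apply pos_of_deriv_pos
    (fun x => x * Real.cosh x - 3 * Real.sinh x + 2 * x)
    (fun x => x * Real.sinh x - 2 * Real.cosh x + 2)
    (fun x => by
      have h := (((hasDerivAt_id x).mul (Real.hasDerivAt_cosh x)).sub
        ((Real.hasDerivAt_sinh x).const_mul 3)).add ((hasDerivAt_id x).const_mul 2)
      refine h.congr_deriv ?_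
      simp only [id_eq]; ring) (by simp) _ ht
  exact fun x hx => aux4b hx

lemma aux4 : StrictMonoOn (fun x : ℝ => (Real.sinh (2 * x) - 2 * x) / x ^ 3)
    (Set.Ioi 0) := by
  have hd : ∀ x : ℝ, 0 < x → HasDerivAt (fun x : ℝ => (Real.sinh (2 * x) - 2 * x) / x ^ 3)
      (((2 * Real.cosh (2 * x) - 2) * x ^ 3 - (Real.sinh (2 * x) - 2 * x) * (3 * x ^ 2)) /
        (x ^ 3) ^ 2) x := by
    intro x hx
    have hnum : HasDerivAt (fun x : ℝ => Real.sinh (2 * x) - 2 * x)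
        (2 * Real.cosh (2 * x) - 2) x := by
      have h1 : HasDerivAt (fun x : ℝ => 2 * x) (2:ℝ) x := by
        simpa using (hasDerivAt_id x).const_mul (2:ℝ)
      have := (h1.sinh).sub h1
      refine this.congr_deriv ?_; ring
    have hden : HasDerivAt (fun x : ℝ => x ^ 3) (3 * x ^ 2) x := by
      simpa using hasDerivAt_pow 3 x
    exact hnum.div hden (by positivity)
  apply strictMonoOn_of_deriv_pos (convex_Ioi 0)
    (fun x hx => (hd x (Set.mem_Ioi.1 hx)).continuousAt.continuousWithinAt)
  intro x hx
  rw [interior_Ioi] at hx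
  have hx0 : 0 < x := hx
  rw [(hd x hx0).deriv]
  have key := aux4c (t := 2 * x) (by linarith)
  have hx3 : (0:ℝ) < x ^ 2 := by positivity
  have hx6 : (0:ℝ) < (x ^ 3) ^ 2 := by positivity
  apply div_pos _ hx6
  nlinarith [key, hx3, hx0]

lemma L4 {a t : ℝ} (ht : 0 < t) (hta : t < a) :
    a ^ 3 * (Real.sinh (2 * t) - 2 * t) < t ^ 3 * (Real.sinh (2 * a) - 2 * a) := by
  have ha : 0 < a := ht.trans hta
  have h := aux4 (Set.mem_Ioi.2 ht) (Set.mem_Ioi.2 ha) hta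
  rw [div_lt_div_iff₀ (by positivity) (by positivity)] at h
  nlinarith [h]

lemma L5 {a t : ℝ} (ht : 0 < t) (hta : t < a) :
    8 * a ^ 3 * (t * Real.cosh t - Real.sinh t) ^ 2 <
      (Real.sinh (2 * a) - 2 * a) * t ^ 3 * (Real.sinh t * Real.cosh t - t) := by
  have ha : 0 < a := ht.trans hta
  have h3 := aux3 ht
  have h2 := aux2 ht
  have h4 := L4 ht hta
  have hst : Real.sinh (2 * t) = 2 * Real.sinh t * Real.cosh t := Real.sinh_two_mul t
  rw [hst] at h4
  set s := Real.sinh t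
  set c := Real.cosh t
  have hsct : 0 < s * c - t := by nlinarith
  have hB := mul_lt_mul_of_pos_right h4 hsct
  have ha3 : 0 < 2 * a ^ 3 := by positivity
  have hA : 4 * (t * c - s) ^ 2 < (s * c - t) ^ 2 := by nlinarith
  have hC := mul_lt_mul_of_pos_left hA ha3
  nlinarith [hB, hC]

lemma hasDerivG (a S K : ℝ) (ha : 0 < a) (hS : 0 < S) {y : ℝ} (hy0 : 0 < y) :
    HasDerivAt (fun y : ℝ =>
        Real.sinh (a*y) / (a*(a*y*Real.cosh (a*y) - Real.sinh (a*y))) - 4/(S*y^2) + K)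
      (a^2*(a*y - Real.sinh (a*y)*Real.cosh (a*y)) /
          (a*(a*y*Real.cosh (a*y) - Real.sinh (a*y)))^2 + 8/(S*y^3)) y := by
  have hay : 0 < a * y := mul_pos ha hy0
  have hpos := aux2 hay
  have hden : a*(a*y*Real.cosh (a*y) - Real.sinh (a*y)) ≠ 0 :=
    ne_of_gt (mul_pos ha hpos)
  have hl : HasDerivAt (fun y : ℝ => a*y) a y := by
    simpa using (hasDerivAt_id y).const_mul a
  have hsinh : HasDerivAt (fun y : ℝ => Real.sinh (a*y)) (Real.cosh (a*y)*a) y := hl.sinh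
  have hcosh : HasDerivAt (fun y : ℝ => Real.cosh (a*y)) (Real.sinh (a*y)*a) y := hl.cosh
  have hD : HasDerivAt (fun y : ℝ => a*(a*y*Real.cosh (a*y) - Real.sinh (a*y)))
      (a*((a*Real.cosh (a*y) + (a*y)*(Real.sinh (a*y)*a)) - Real.cosh (a*y)*a)) y :=
    ((hl.mul hcosh).sub hsinh).const_mul a
  have h1 := hsinh.div hD hden
  have h1' : HasDerivAt (fun y : ℝ =>
      Real.sinh (a*y) / (a*(a*y*Real.cosh (a*y) - Real.sinh (a*y))))
      (a^2*(a*y - Real.sinh (a*y)*Real.cosh (a*y)) /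
        (a*(a*y*Real.cosh (a*y) - Real.sinh (a*y)))^2) y := by
    refine h1.congr_deriv ?_
    have hc := Real.cosh_sq_sub_sinh_sq (a*y)
    congr 1
    linear_combination (a^2*(a*y)) * hc
  have hy2 : S*y^2 ≠ 0 := by positivity
  have h2 := (hasDerivAt_const y (4:ℝ)).div ((hasDerivAt_pow 2 y).const_mul S) hy2
  have h2' : HasDerivAt (fun y : ℝ => 4/(S*y^2)) (-(8/(S*y^3))) y := by
    refine h2.congr_deriv ?_
    field_simp
    ring
  have := (h1'.sub h2').add_const K
  refine this.congr_deriv ?_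
  ring

noncomputable def coth (x : ℝ) : ℝ := Real.cosh x / Real.sinh x

theorem stmt_8 (a : ℝ) (ha : 0 < a) :
    StrictAntiOn (fun y : ℝ =>
      (coth a - y * coth (a * y)) / ((a * y * coth (a * y) - 1) * (a * coth a - 1)) +
        4 * (1 - y⁻¹ ^ 2) / (Real.sinh (2 * a) - 2 * a))
      (Set.Ioo 0 1) := by
  have hS : 0 < Real.sinh (2*a) - 2*a := by
    have := Real.self_lt_sinh_iff.2 (by linarith : (0:ℝ) < 2*a)
    linarith
  set S : ℝ := Real.sinh (2*a) - 2*a with hSdef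
  set K : ℝ := 4/S - Real.sinh a/(a*(a*Real.cosh a - Real.sinh a)) with hKdef
  have hGanti : StrictAntiOn (fun y : ℝ =>
      Real.sinh (a*y) / (a*(a*y*Real.cosh (a*y) - Real.sinh (a*y))) - 4/(S*y^2) + K)
      (Set.Ioo 0 1) := by
    apply strictAntiOn_of_deriv_neg (convex_Ioo 0 1)
    · exact fun y hy => (hasDerivG a S K ha hS hy.1).continuousAt.continuousWithinAt
    · intro y hy
      rw [interior_Ioo] at hy
      obtain ⟨hy0, hy1⟩ := hy
      rw [(hasDerivG a S K ha hS hy0).deriv]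
      have hay : 0 < a * y := mul_pos ha hy0
      have haya : a * y < a := by nlinarith
      have h5 := L5 hay haya
      rw [← hSdef] at h5
      have hpos := aux2 hay
      have hD2 : 0 < (a*(a*y*Real.cosh (a*y) - Real.sinh (a*y)))^2 := by positivity
      have hQ : 0 < S*y^3 := by positivity
      have key : 8 * (a*(a*y*Real.cosh (a*y) - Real.sinh (a*y)))^2 <
          a^2*(Real.sinh (a*y)*Real.cosh (a*y) - a*y) * (S*y^3) := by
        nlinarith [h5, ha]
      have hlt := (div_lt_div_iff₀ hQ hD2).2 key
      have hneg : a^2*(a*y - Real.sinh (a*y)*Real.cosh (a*y)) /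
          (a*(a*y*Real.cosh (a*y) - Real.sinh (a*y)))^2 =
          -(a^2*(Real.sinh (a*y)*Real.cosh (a*y) - a*y) /
          (a*(a*y*Real.cosh (a*y) - Real.sinh (a*y)))^2) := by ring
      rw [hneg]
      linarith
  apply hGanti.congr
  intro y hy
  obtain ⟨hy0, hy1⟩ := hy
  have hay : 0 < a * y := mul_pos ha hy0
  have hsy : Real.sinh (a*y) ≠ 0 := ne_of_gt (Real.sinh_pos_iff.2 hay)
  have hsa : Real.sinh a ≠ 0 := ne_of_gt (Real.sinh_pos_iff.2 ha)
  have h2 : a*y*Real.cosh (a*y) - Real.sinh (a*y) ≠ 0 := ne_of_gt (aux2 hay)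
  have h2a : a*Real.cosh a - Real.sinh a ≠ 0 := ne_of_gt (aux2 ha)
  have hS' : S ≠ 0 := ne_of_gt hS
  have hy' : y ≠ 0 := ne_of_gt hy0
  have ha' : a ≠ 0 := ne_of_gt ha
  have hq1 : a*y*(Real.cosh (a*y)/Real.sinh (a*y)) - 1 ≠ 0 := by
    have : a*y*(Real.cosh (a*y)/Real.sinh (a*y)) - 1 =
        (a*y*Real.cosh (a*y) - Real.sinh (a*y))/Real.sinh (a*y) := by field_simp
    rw [this]
    exact div_ne_zero h2 hsy
  have hq2 : a*(Real.cosh a/Real.sinh a) - 1 ≠ 0 := by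
    have : a*(Real.cosh a/Real.sinh a) - 1 = (a*Real.cosh a - Real.sinh a)/Real.sinh a := by
      field_simp
    rw [this]
    exact div_ne_zero h2a hsa
  simp only [coth, hKdef, hSdef]
  field_simp
  ring
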